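/- If there exists a regular pseudocompact space X that is not countably compact and has countable spread (every discrete subspace of X is countable), then there exists an S-space, i.e. a regular hereditarily separable space that is not Lindelöf. -/

import Mathlib

open Set

/-- Feebly compact: every locally finite family of nonempty open sets is finite. -/
def FeeblyCompact (X : Type*) [TopologicalSpace X] : Prop :=
  ∀ (ι : Type) (U : ι → Set X), (∀ i, IsOpen (U i) ∧ (U i).Nonempty) →
    LocallyFinite U → Finite ι

/-- Countably compact: every countable open cover has a finite subcover. -/
def CountablyCompactCover (X : Type*) [TopologicalSpace X] : Prop :=
  ∀ U : ℕ → Set X, (∀ n, IsOpen (U n)) → (⋃ n, U n) = Set.univ →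
    ∃ s : Finset ℕ, (⋃ n ∈ s, U n) = Set.univ

section helpers
open Topology TopologicalSpace
variable {X : Type} [TopologicalSpace X]

lemma feebly_dense (hF : FeeblyCompact X) (V : ℕ → Set X) (hVo : ∀ n, IsOpen (V n))
    (hmono : Monotone V) (hcov : (⋃ n, V n) = Set.univ) : ∃ n, Dense (V n) := by
  by_contra hcon
  push_neg at hcon
  have hp : ∀ n, ∃ p, p ∉ closure (V n) := by
    intro n
    have := hcon n
    rw [dense_iff_closure_eq] at this
    exact (Set.ne_univ_iff_exists_notMem _).1 this
  choose p hp using hp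
  have hm : ∀ n, ∃ m, p n ∈ V m := by
    intro n
    have : p n ∈ ⋃ k, V k := hcov ▸ Set.mem_univ _
    exact mem_iUnion.1 this
  choose m hm using hm
  set W : ℕ → Set X := fun n => V (m n) \ closure (V n) with hW
  have : Finite ℕ := by
    refine hF ℕ W (fun n => ⟨(hVo (m n)).sdiff isClosed_closure, ⟨p n, hm n, hp n⟩⟩) ?_
    intro q
    have : q ∈ ⋃ k, V k := hcov ▸ Set.mem_univ _
    obtain ⟨k, hk⟩ := mem_iUnion.1 this
    refine ⟨V k, (hVo k).mem_nhds hk, (Set.finite_Iio k).subset ?_⟩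
    intro n hn
    by_contra hnk
    simp only [Set.mem_Iio, not_lt] at hnk
    obtain ⟨q', hq'⟩ := hn
    exact hq'.1.2 (subset_closure (hmono hnk hq'.2))
  haveI := this; exact not_finite ℕ

lemma lindelof_ccc [RegularSpace X] (hF : FeeblyCompact X) (hL : LindelofSpace X) :
    CountablyCompactCover X := by
  intro U hUo hUcov
  rcases isEmpty_or_nonempty X with hE | hNE
  · exact ⟨∅, by simp [Set.eq_empty_of_isEmpty, (Set.univ_eq_empty_iff).2 hE]⟩
  have hmem : ∀ p : X, ∃ k, p ∈ U k := fun p => mem_iUnion.1 (hUcov ▸ Set.mem_univ p)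
  choose n hn using hmem
  have hO : ∀ p : X, ∃ O : Set X, IsOpen O ∧ p ∈ O ∧ closure O ⊆ U (n p) := by
    intro p
    obtain ⟨V, hV, hVc, hVU⟩ := exists_mem_nhds_isClosed_subset ((hUo (n p)).mem_nhds (hn p))
    refine ⟨interior V, isOpen_interior, mem_interior_iff_mem_nhds.2 hV, ?_⟩
    exact (closure_minimal interior_subset hVc).trans hVU
  choose O hOo hOp hOU using hO
  obtain ⟨r, hrc, hrcov⟩ := isLindelof_univ.elim_countable_subcover O hOo
    (fun p _ => mem_iUnion.2 ⟨p, hOp p⟩)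
  have hrne : r.Nonempty := by
    rcases Set.eq_empty_or_nonempty r with rfl | h
    · exfalso; simpa using hrcov (Set.mem_univ hNE.some)
    · exact h
  obtain ⟨e, he⟩ := Set.Countable.exists_eq_range hrc hrne
  set V : ℕ → Set X := fun mm => ⋃ k ∈ Finset.range (mm+1), O (e k) with hV
  have hVo : ∀ mm, IsOpen (V mm) := fun mm => isOpen_biUnion (fun k _ => hOo (e k))
  have hVmono : Monotone V := by
    intro a b hab
    apply Set.biUnion_subset_biUnion_left
    intro k hk
    have : k < a + 1 := Finset.mem_range.1 hk
    exact Finset.mem_range.2 (by omega)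
  have hVcov : (⋃ mm, V mm) = Set.univ := by
    apply Set.eq_univ_of_univ_subset
    intro q hq
    obtain ⟨p, hpr, hpq⟩ := mem_iUnion₂.1 (hrcov hq)
    obtain ⟨k, rfl⟩ := he ▸ hpr
    exact mem_iUnion.2 ⟨k, mem_iUnion₂.2 ⟨k, Finset.mem_range.2 (Nat.lt_succ_self k), hpq⟩⟩
  obtain ⟨mm, hdense⟩ := feebly_dense hF V hVo hVmono hVcov
  refine ⟨(Finset.range (mm+1)).image (fun k => n (e k)), ?_⟩
  apply Set.eq_univ_of_univ_subset
  have hC : IsClosed (⋃ k ∈ Finset.range (mm+1), closure (O (e k))) :=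
    Set.Finite.isClosed_biUnion (Finset.finite_toSet _) (fun k _ => isClosed_closure)
  have h1 : (Set.univ : Set X) ⊆ ⋃ k ∈ Finset.range (mm+1), closure (O (e k)) := by
    rw [← hdense.closure_eq]
    exact closure_minimal (Set.iUnion₂_mono fun k _ => subset_closure) hC
  refine h1.trans ?_
  intro q hq
  obtain ⟨k, hk, hqk⟩ := mem_iUnion₂.1 hq
  exact mem_iUnion₂.2 ⟨n (e k), Finset.mem_image.2 ⟨k, hk, rfl⟩, hOU (e k) hqk⟩

end helpers

lemma exists_transfinite_choice {I α : Type*} [LinearOrder I] [WellFoundedLT I]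
    (hIio : ∀ i : I, (Set.Iio i).Countable)
    (P : Set α → α → Prop)
    (H : ∀ s : Set α, s.Countable → ∃ a, P s a) :
    ∃ x : I → α, ∀ i, P (x '' Set.Iio i) (x i) := by
  have wf : WellFounded ((· < ·) : I → I → Prop) := wellFounded_lt
  have hco : ∀ (i : I) (rec : (j : I) → j < i → α),
      (Set.range fun j : Set.Iio i => rec j j.2).Countable := by
    intro i rec
    haveI := (hIio i).to_subtype
    exact Set.countable_range _
  set F : (i : I) → ((j : I) → j < i → α) → α := fun i rec =>
    (H _ (hco i rec)).choose with hF
  refine ⟨wf.fix F, fun i => ?_⟩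
  have hx : wf.fix F i = F i (fun j _ => wf.fix F j) := wf.fix_eq F i
  have hspec := (H _ (hco i (fun j _ => wf.fix F j))).choose_spec
  have himg : (Set.range fun j : Set.Iio i => wf.fix F j) = wf.fix F '' Set.Iio i :=
    (Set.image_eq_range _ _).symm
  suffices hsuf : P (Set.range fun j : Set.Iio i => wf.fix F j) (wf.fix F i) by
    rwa [himg] at hsuf
  rw [hx]
  exact hspec

section Isec
open Cardinal
abbrev OmegaOne : Type := (Ordinal.omega 1 : Ordinal.{0}).ToType

lemma I_Iio_countable (i : OmegaOne) : (Set.Iio i).Countable := by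
  letI inst : IsWellOrder OmegaOne (· < ·) := isWellOrder_lt
  rw [Cardinal.countable_iff_lt_aleph_one]
  have h1 : #(Set.Iio i) = (@Ordinal.typein OmegaOne (· < ·) inst i).card :=
    (@Ordinal.card_typein OmegaOne (· < ·) inst i).symm
  rw [h1, ← Cardinal.lt_ord, Cardinal.ord_aleph]
  have h2 := @Ordinal.typein_lt_type OmegaOne (· < ·) inst i
  rwa [Ordinal.type_toType] at h2

lemma I_uncountable : ¬ (Set.univ : Set OmegaOne).Countable := by
  intro hc
  rw [Set.countable_univ_iff] at hc
  have h1 : #OmegaOne = Cardinal.aleph 1 := by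
    rw [Cardinal.mk_toType, Ordinal.card_omega]
  have := Cardinal.mk_le_aleph0 (α := OmegaOne)
  rw [h1] at this
  exact absurd this (not_le.2 Cardinal.aleph0_lt_aleph_one)

lemma I_Iic_countable (a : OmegaOne) : (Set.Iic a).Countable := by
  rw [← Set.Iio_union_right]
  exact (I_Iio_countable a).union (Set.countable_singleton a)

lemma I_avoid {s : Set OmegaOne} (hs : s.Countable) : ∃ b : OmegaOne, b ∉ s := by
  by_contra hcc
  push_neg at hcc
  exact I_uncountable (hs.mono (fun q _ => hcc q))

lemma I_bound {s : Set OmegaOne} (hs : s.Countable) : ∃ b : OmegaOne, ∀ a ∈ s, a < b := by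
  have hB : (⋃ a ∈ s, Set.Iic a).Countable := hs.biUnion (fun a _ => I_Iic_countable a)
  obtain ⟨b, hb⟩ := I_avoid hB
  exact ⟨b, fun a ha => not_le.1 (fun hle => hb (Set.mem_biUnion ha hle))⟩
end Isec

lemma discrete_of_nbhds {X : Type*} [TopologicalSpace X] {S : Set X}
    (h : ∀ p ∈ S, ∃ N, IsOpen N ∧ N ∩ S = {p}) : DiscreteTopology ↥S := by
  rw [discreteTopology_iff_isOpen_singleton]
  rintro ⟨p, hp⟩
  obtain ⟨N, hNo, hNS⟩ := h p hp
  have : {(⟨p, hp⟩ : ↥S)} = Subtype.val ⁻¹' N := by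
    ext q
    simp only [Set.mem_singleton_iff, Set.mem_preimage]
    constructor
    · rintro rfl
      have : p ∈ N ∩ S := hNS ▸ rfl
      exact this.1
    · intro hq
      have : (q : X) ∈ N ∩ S := ⟨hq, q.2⟩
      rw [hNS] at this
      exact Subtype.ext this
  rw [this]
  exact hNo.preimage continuous_subtype_val

lemma separableSpace_of {Y : Type*} [TopologicalSpace Y] (s D : Set Y) (hDs : D ⊆ s)
    (hDc : D.Countable) (hdense : s ⊆ closure D) : TopologicalSpace.SeparableSpace ↥s := by
  refine ⟨⟨Subtype.val ⁻¹' D, hDc.preimage Subtype.val_injective, ?_⟩⟩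
  intro a
  rw [closure_subtype]
  have h1 : (Subtype.val '' (Subtype.val ⁻¹' D : Set ↥s)) = s ∩ D := Subtype.image_preimage_coe s D
  rw [h1, Set.inter_eq_self_of_subset_right hDs]
  exact hdense a.2


/-- If there is a regular pseudocompact (feebly compact) space that is not
countably compact and has countable spread, then there is an S-space: a regular
hereditarily separable non-Lindelöf space. -/
theorem stmt_6
    (h : ∃ (X : Type) (_ : TopologicalSpace X), RegularSpace X ∧ FeeblyCompact X ∧
      ¬ CountablyCompactCover X ∧ ∀ A : Set X, DiscreteTopology ↥A → A.Countable) :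
    ∃ (Y : Type) (_ : TopologicalSpace Y), RegularSpace Y ∧
      (∀ s : Set Y, TopologicalSpace.SeparableSpace ↥s) ∧ ¬ LindelofSpace Y := by
  classical
  obtain ⟨X, tX, hreg, hF, hncc, hspread⟩ := h
  have hnl : ¬ LindelofSpace X := fun hL => hncc (lindelof_ccc hF hL)
  have hcov : ∃ (ι : Type) (U : ι → Set X), (∀ i, IsOpen (U i)) ∧
      ((Set.univ : Set X) ⊆ ⋃ i, U i) ∧
      ∀ t : Set ι, t.Countable → ∃ p, p ∉ ⋃ i ∈ t, U i := by
    by_contra hc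
    push_neg at hc
    apply hnl
    refine ⟨isLindelof_iff_countable_subcover.mpr ?_⟩
    intro ι U hUo hUc
    obtain ⟨t, htc, htp⟩ := hc ι U hUo hUc
    exact ⟨t, htc, fun p _ => htp p⟩
  obtain ⟨ι, U, hUo, hUcov, hUnc⟩ := hcov
  have hmem : ∀ p : X, ∃ i, p ∈ U i := fun p => Set.mem_iUnion.1 (hUcov (Set.mem_univ p))
  choose idx hidx using hmem
  obtain ⟨x, hx⟩ := exists_transfinite_choice (I := OmegaOne) I_Iio_countable
      (fun s p => ∀ q ∈ s, p ∉ U (idx q))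
      (fun s hs => by
        obtain ⟨p, hp⟩ := hUnc (idx '' s) (hs.image idx)
        exact ⟨p, fun q hq hpU => hp (Set.mem_biUnion (Set.mem_image_of_mem idx hq) hpU)⟩)
  have hx' : ∀ {j i : OmegaOne}, j < i → x i ∉ U (idx (x j)) :=
    fun {j i} hji => hx i (x j) (Set.mem_image_of_mem x hji)
  have hxinj : Function.Injective x := by
    intro a b hab
    by_contra hne
    rcases lt_or_gt_of_ne hne with hlt | hlt
    · exact hx' hlt (by rw [← hab]; exact hidx (x a))
    · exact hx' hlt (by rw [hab]; exact hidx (x b))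
  letI tI : TopologicalSpace OmegaOne := tX.induced x
  refine ⟨OmegaOne, tI, ?_, ?_, ?_⟩
  · haveI := hreg
    exact regularSpace_induced x
  · -- hereditarily separable
    intro s
    set T : Set X := x '' s with hT
    have hTsep : ∃ E, E ⊆ T ∧ E.Countable ∧ T ⊆ closure E := by
      by_contra hns
      push_neg at hns
      have hns' : ∀ E, E ⊆ T → E.Countable → ∃ p ∈ T, p ∉ closure E := by
        intro E h1 h2
        obtain ⟨p, hp1, hp2⟩ := Set.not_subset.1 (hns E h1 h2)
        exact ⟨p, hp1, hp2⟩
      obtain ⟨y, hy⟩ := exists_transfinite_choice (I := OmegaOne) I_Iio_countable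
        (fun s' p => p ∈ T ∧ p ∉ closure (s' ∩ T))
        (fun s' hs' => by
          obtain ⟨p, hp1, hp2⟩ := hns' (s' ∩ T) Set.inter_subset_right
            (hs'.mono Set.inter_subset_left)
          exact ⟨p, hp1, hp2⟩)
      have hy0 : ∀ i, y i ∈ T ∧ y i ∉ closure (y '' Set.Iio i ∩ T) := hy
      have hyT : ∀ i, y i ∈ T := fun i => (hy0 i).1
      have hy2 : ∀ i, y i ∉ closure (y '' Set.Iio i) := by
        intro i
        have h2 := (hy0 i).2
        have heq : y '' Set.Iio i ∩ T = y '' Set.Iio i :=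
          Set.inter_eq_self_of_subset_left (by
            rintro q ⟨j, _, rfl⟩
            exact hyT j)
        rwa [heq] at h2
      have hyinj : Function.Injective y := by
        intro a b hab
        by_contra hne
        rcases lt_or_gt_of_ne hne with hlt | hlt
        · exact hy2 b (subset_closure ⟨a, hlt, hab⟩)
        · exact hy2 a (subset_closure ⟨b, hlt, hab.symm⟩)
      have hg : ∀ i, ∃ j, x j = y i := by
        intro i
        obtain ⟨j, _, hj2⟩ := hyT i
        exact ⟨j, hj2⟩
      choose g hgx using hg
      have hginj : Function.Injective g := fun a b hab =>
        hyinj (by rw [← hgx a, ← hgx b, hab])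
      obtain ⟨z, hz⟩ := exists_transfinite_choice (I := OmegaOne) I_Iio_countable
        (fun s' t => ∀ a ∈ s', a < t ∧ g a < g t)
        (fun s' hs' => by
          obtain ⟨b, hb⟩ := I_bound (hs'.union (hs'.image g))
          obtain ⟨t, ht⟩ := I_avoid ((I_Iic_countable b).union
            ((I_Iic_countable b).preimage hginj))
          refine ⟨t, fun a ha => ?_⟩
          have h1 : a < b := hb a (Set.mem_union_left _ ha)
          have h2 : g a < b := hb (g a) (Set.mem_union_right _ ⟨a, ha, rfl⟩)
          have h3 : b < t := not_le.1 (fun hle => ht (Set.mem_union_left _ hle))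
          have h4 : b < g t := not_le.1 (fun hle => ht (Set.mem_union_right _ hle))
          exact ⟨h1.trans h3, h2.trans h4⟩)
      have hzmono : ∀ {a b : OmegaOne}, a < b → z a < z b ∧ g (z a) < g (z b) :=
        fun {a b} hab => hz b (z a) (Set.mem_image_of_mem z hab)
      set w : OmegaOne → X := fun i => y (z i) with hw
      have hwinj : Function.Injective w := by
        intro a b hab
        have hzz : z a = z b := hyinj hab
        by_contra hne
        rcases lt_or_gt_of_ne hne with hlt | hlt
        · exact absurd hzz (ne_of_lt (hzmono hlt).1)
        · exact absurd hzz (ne_of_gt (hzmono hlt).1)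
      set S : Set X := Set.range w with hS
      have hdisc : DiscreteTopology ↥S := by
        apply discrete_of_nbhds
        rintro p ⟨i, rfl⟩
        refine ⟨U (idx (w i)) ∩ (closure (y '' Set.Iio (z i)))ᶜ,
          (hUo _).inter isClosed_closure.isOpen_compl, ?_⟩
        apply Set.Subset.antisymm
        · rintro q ⟨⟨hq1, hq2⟩, j, rfl⟩
          rcases lt_trichotomy j i with hlt | heq | hgt
          · exact absurd
              (subset_closure (Set.mem_image_of_mem y (Set.mem_Iio.2 (hzmono hlt).1))) hq2
          · rw [heq]; rfl
          · exfalso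
            have hgi : g (z i) < g (z j) := (hzmono hgt).2
            have := hx' hgi
            rw [hgx (z j), hgx (z i)] at this
            exact this hq1
        · rintro q hq
          rw [Set.mem_singleton_iff] at hq
          subst hq
          exact ⟨⟨hidx (w i), hy2 (z i)⟩, Set.mem_range_self i⟩
      have hScount : S.Countable := hspread S hdisc
      haveI : Countable ↥S := hScount.to_subtype
      have hcI : Countable OmegaOne :=
        Function.Injective.countable
          (f := fun i : OmegaOne => (⟨w i, Set.mem_range_self i⟩ : ↥S))
          (fun a b hab => hwinj (congrArg Subtype.val hab))
      exact I_uncountable Set.countable_univ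
    obtain ⟨E, hET, hEc, hEcl⟩ := hTsep
    set D : Set OmegaOne := s ∩ x ⁻¹' E with hD
    apply separableSpace_of s D Set.inter_subset_left
      ((hEc.preimage hxinj).mono Set.inter_subset_right)
    intro i hi
    have hclo : x i ∈ closure (x '' D) := by
      have himg : x '' D = E := by
        rw [hD, Set.image_inter_preimage]
        exact Set.inter_eq_self_of_subset_right hET
      rw [himg]
      exact hEcl ⟨i, hi, rfl⟩
    have hind : Topology.IsInducing x := Topology.IsInducing.induced x
    rw [hind.closure_eq_preimage_closure_image D]
    exact hclo
  · -- not Lindelof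
    intro hL
    set O : OmegaOne → Set OmegaOne := fun i => x ⁻¹' (U (idx (x i))) with hO
    have hOo : ∀ i, IsOpen (O i) := fun i => (hUo _).preimage continuous_induced_dom
    have hOc : (Set.univ : Set OmegaOne) ⊆ ⋃ i, O i :=
      fun i _ => Set.mem_iUnion.2 ⟨i, hidx (x i)⟩
    obtain ⟨r, hrc, hrcov⟩ := (isLindelof_univ (X := OmegaOne)).elim_countable_subcover O hOo hOc
    obtain ⟨b, hb⟩ := I_bound hrc
    obtain ⟨a, har, hab⟩ := Set.mem_iUnion₂.1 (hrcov (Set.mem_univ b))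
    exact hx' (hb a har) hab
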